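/- If L_cp = 0 (equivalently Δ⊥ ∘ L ∘ Δ = 0), then the dynamics generated by L is NCGD: Δ ∘ exp(tL) ∘ Δ⊥ ∘ exp(τL) ∘ Δ = 0 for all t, τ ≥ 0. -/

import Mathlib

set_option maxHeartbeats 1000000 in
set_option synthInstance.maxHeartbeats 400000 in
theorem cp_zero_ncgd_aux {A : Type*} [NormedRing A] [NormedAlgebra ℂ A] [CompleteSpace A]
    (L Δ : A) (hΔ : Δ * Δ = Δ) (h : (1 - Δ) * L * Δ = 0) (t τ : ℝ) :
    Δ * NormedSpace.exp (t • L) * (1 - Δ) * NormedSpace.exp (τ • L) * Δ = 0 := by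
  have hLΔ : Δ * (L * Δ) = L * Δ := by
    have h' : L * Δ - Δ * (L * Δ) = 0 := by
      have := h
      rwa [sub_mul, one_mul, sub_mul, mul_assoc] at this
    rw [sub_eq_zero] at h'
    exact h'.symm
  have key : ∀ n : ℕ, (1 - Δ) * L ^ n * Δ = 0 := by
    intro n
    induction n with
    | zero =>
      simp only [pow_zero, mul_one, sub_mul, one_mul, hΔ, sub_self]
    | succ n ih =>
      have : (1 - Δ) * L ^ (n + 1) * Δ = ((1 - Δ) * L ^ n * Δ) * (L * Δ) := by
        rw [pow_succ]
        rw [mul_assoc ((1 - Δ) * L ^ n) Δ (L * Δ), hLΔ]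
        simp [mul_assoc]
      rw [this, ih, zero_mul]
  have keyexp : (1 - Δ) * NormedSpace.exp (τ • L) * Δ = 0 := by
    let f : A →L[ℂ] A := ContinuousLinearMap.mulLeftRight ℂ A (1 - Δ) Δ
    have hsum : Summable fun n : ℕ => ((n.factorial : ℂ)⁻¹ • (τ • L) ^ n) :=
      NormedSpace.expSeries_summable' (𝕂 := ℂ) (τ • L)
    have hf : (1 - Δ) * NormedSpace.exp (τ • L) * Δ = f (NormedSpace.exp (τ • L)) := by
      simp only [f, ContinuousLinearMap.mulLeftRight_apply]
    rw [hf, NormedSpace.exp_eq_tsum (𝕂 := ℂ), f.map_tsum hsum]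
    have hz : ∀ n : ℕ, f ((n.factorial : ℂ)⁻¹ • (τ • L) ^ n) = 0 := by
      intro n
      have : f ((n.factorial : ℂ)⁻¹ • (τ • L) ^ n)
          = (n.factorial : ℂ)⁻¹ • (τ ^ n • ((1 - Δ) * L ^ n * Δ)) := by
        simp only [f, map_smul, ContinuousLinearMap.mulLeftRight_apply, smul_pow,
          mul_smul_comm, smul_mul_assoc]
      rw [this, key n, smul_zero, smul_zero]
    simp [hz]
  calc Δ * NormedSpace.exp (t • L) * (1 - Δ) * NormedSpace.exp (τ • L) * Δ
      = Δ * NormedSpace.exp (t • L) * ((1 - Δ) * NormedSpace.exp (τ • L) * Δ) := by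
        simp [mul_assoc]
    _ = 0 := by rw [keyexp, mul_zero]

set_option maxHeartbeats 1000000 in
set_option synthInstance.maxHeartbeats 400000 in
/-- if `L_cp = 0` then the dynamics generated by `L` is NCGD. -/
theorem cp_zero_implies_ncgd (d : ℕ)
    (L Δ : EuclideanSpace ℂ (Fin d) →L[ℂ] EuclideanSpace ℂ (Fin d)) (hΔ : Δ * Δ = Δ)
    (h : (1 - Δ) * L * Δ = 0) :
    ∀ t τ : ℝ, 0 ≤ t → 0 ≤ τ →
      Δ * NormedSpace.exp (t • L) * (1 - Δ) * NormedSpace.exp (τ • L) * Δ = 0 := by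
  intro t τ _ _
  exact cp_zero_ncgd_aux L Δ hΔ h t τ
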